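/- With Q_{t,s} as above, for every T>0 there exists a constant C=C(T)>0 such that (det Q_{t,s})^{1/2} ≥ C (t−s)^{d/2} for all 0<s<t<T. -/

import Mathlib

open MeasureTheory Matrix Set

/-- Columns (hit with a constant vector) of `Ut · c` solve the linear ODE. -/
lemma stmt2_sol {d : ℕ} {M : ℝ → Matrix (Fin d) (Fin d) ℝ}
    {Ut : ℝ → ℝ → Matrix (Fin d) (Fin d) ℝ}
    (hUderiv : ∀ s t : ℝ, ∀ i j : Fin d,
      HasDerivAt (fun τ : ℝ => Ut τ s i j) ((M (-t) * Ut t s) i j) t)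
    (c : ℝ) (w : Fin d → ℝ) (τ : ℝ) :
    HasDerivAt (fun τ : ℝ => Ut τ c *ᵥ w) (M (-τ) *ᵥ (Ut τ c *ᵥ w)) τ := by
  rw [Matrix.mulVec_mulVec]
  apply hasDerivAt_pi.2
  intro i
  have h := HasDerivAt.fun_sum (u := Finset.univ)
    (fun k (_ : k ∈ Finset.univ) => (hUderiv c τ i k).mul_const (w k))
  simpa [Matrix.mulVec, dotProduct] using h

/-- sup-norm bound for `mulVec`. -/
lemma stmt2_mulVec_norm_le {d : ℕ} (N : Matrix (Fin d) (Fin d) ℝ) {B : ℝ} (hB : 0 ≤ B)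
    (hN : ∀ i j, |N i j| ≤ B) (y : Fin d → ℝ) : ‖N *ᵥ y‖ ≤ (d : ℝ) * B * ‖y‖ := by
  rw [pi_norm_le_iff_of_nonneg (by positivity)]
  intro i
  calc ‖(N *ᵥ y) i‖ = |∑ k, N i k * y k| := by
        simp [Matrix.mulVec, dotProduct, Real.norm_eq_abs]
    _ ≤ ∑ k, |N i k * y k| := Finset.abs_sum_le_sum_abs _ _
    _ ≤ ∑ _k : Fin d, B * ‖y‖ := Finset.sum_le_sum (fun k _ => by
        rw [abs_mul]
        have h1 : |y k| ≤ ‖y‖ := by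
          simpa [Real.norm_eq_abs] using norm_le_pi_norm y k
        exact mul_le_mul (hN i k) h1 (abs_nonneg _) hB)
    _ = (d : ℝ) * B * ‖y‖ := by
        simp [Finset.sum_const, Finset.card_univ]; ring


/-- Uniqueness of solutions of the linear ODE, forwards in time. -/
lemma stmt2_uniq {d : ℕ} {M : ℝ → Matrix (Fin d) (Fin d) ℝ} {B T : ℝ} (hB : 0 ≤ B)
    {a b : ℝ} (hab : a ≤ b) (haT : -T ≤ a) (hbT : b ≤ T)
    (hMB : ∀ u ∈ Icc (-T) T, ∀ i j, |M u i j| ≤ B)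
    {f g : ℝ → Fin d → ℝ}
    (hf : ∀ τ, HasDerivAt f (M (-τ) *ᵥ f τ) τ)
    (hg : ∀ τ, HasDerivAt g (M (-τ) *ᵥ g τ) τ)
    (hfg : f a = g a) : f b = g b := by
  set v : ℝ → (Fin d → ℝ) → (Fin d → ℝ) :=
    fun τ y => M (-(max a (min τ b))) *ᵥ y with hvdef
  have hclamp : ∀ τ : ℝ, -(max a (min τ b)) ∈ Icc (-T) T := by
    intro τ
    constructor
    · have h1 : max a (min τ b) ≤ b := max_le (le_trans hab le_rfl) (min_le_right _ _) |>.trans le_rfl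
      have := max_le (hab) (min_le_right τ b)
      linarith [this]
    · have : a ≤ max a (min τ b) := le_max_left _ _
      linarith
  have hlip : ∀ τ, LipschitzWith ((d : ℝ) * B).toNNReal (v τ) := by
    intro τ
    apply LipschitzWith.of_dist_le_mul
    intro y z
    simp only [dist_eq_norm, hvdef]
    rw [← Matrix.mulVec_sub]
    have h := stmt2_mulVec_norm_le (M (-(max a (min τ b)))) hB
      (hMB _ (hclamp τ)) (y - z)
    rwa [Real.coe_toNNReal _ (by positivity)]
  have key := ODE_solution_unique_of_mem_Icc_right
    (v := v) (s := fun _ => univ) (K := ((d : ℝ) * B).toNNReal)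
    (fun τ _ => (hlip τ).lipschitzOnWith)
    (fun τ _ => (hf τ).continuousAt.continuousWithinAt)
    (fun τ hτ => by
      have hcl : max a (min τ b) = τ := by
        rw [min_eq_left hτ.2.le, max_eq_right hτ.1]
      simpa only [hvdef, hcl] using (hf τ).hasDerivWithinAt)
    (fun _ _ => mem_univ _)
    (fun τ _ => (hg τ).continuousAt.continuousWithinAt)
    (fun τ hτ => by
      have hcl : max a (min τ b) = τ := by
        rw [min_eq_left hτ.2.le, max_eq_right hτ.1]
      simpa only [hvdef, hcl] using (hg τ).hasDerivWithinAt)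
    (fun _ _ => mem_univ _)
    hfg
  exact key (right_mem_Icc.2 hab)


/-- Backward-in-time entry bound on `Ut r b` for `r ≤ b`. -/
lemma stmt2_backBound {d : ℕ} {M : ℝ → Matrix (Fin d) (Fin d) ℝ}
    {Ut : ℝ → ℝ → Matrix (Fin d) (Fin d) ℝ}
    (hUinit : ∀ s : ℝ, Ut s s = 1)
    (hUderiv : ∀ s t : ℝ, ∀ i j : Fin d,
      HasDerivAt (fun τ : ℝ => Ut τ s i j) ((M (-t) * Ut t s) i j) t)
    {B T : ℝ} (hB : 0 ≤ B)
    (hMB : ∀ u ∈ Icc (-T) T, ∀ i j, |M u i j| ≤ B) (hT : 0 ≤ T)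
    {r b : ℝ} (hrb : r ≤ b) (hrT : -T ≤ r) (hb0 : b ≤ 0)
    (i j : Fin d) : |Ut r b i j| ≤ Real.exp ((d : ℝ) * B * T) := by
  set w : Fin d → ℝ := Pi.single j 1 with hw
  set g : ℝ → Fin d → ℝ := fun u => Ut (r + b - u) b *ᵥ w with hg
  have hderiv : ∀ u : ℝ, HasDerivAt g
      ((-1 : ℝ) • (M (-(r + b - u)) *ᵥ g u)) u := by
    intro u
    have h1 : HasDerivAt (fun u : ℝ => r + b - u) (-1) u := by
      simpa using (hasDerivAt_id u).const_sub (r + b)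
    exact (stmt2_sol hUderiv b w (r + b - u)).scomp u h1
  have key := norm_le_gronwallBound_of_norm_deriv_right_le
    (f := g) (f' := fun u => (-1 : ℝ) • (M (-(r + b - u)) *ᵥ g u))
    (a := r) (b := b) (δ := ‖w‖) (K := (d : ℝ) * B) (ε := 0)
    (fun u _ => (hderiv u).continuousAt.continuousWithinAt)
    (fun u _ => (hderiv u).hasDerivWithinAt)
    (by
      have : g r = w := by
        simp [hg, show r + b - r = b by ring, hUinit b]
      rw [this])
    (fun u hu => by
      have hmem : -(r + b - u) ∈ Icc (-T) T := by
        constructor <;> [linarith [hu.1, hu.2.le]; linarith [hu.1, hu.2.le]]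
      have h := stmt2_mulVec_norm_le (M (-(r + b - u))) hB (hMB _ hmem) (g u)
      calc ‖(-1 : ℝ) • (M (-(r + b - u)) *ᵥ g u)‖
          = ‖M (-(r + b - u)) *ᵥ g u‖ := by rw [norm_smul]; simp
        _ ≤ (d : ℝ) * B * ‖g u‖ + 0 := by linarith)
  have hgb := key b (right_mem_Icc.2 hrb)
  rw [gronwallBound_ε0] at hgb
  have hgbv : g b = Ut r b *ᵥ w := by simp [hg, show r + b - b = r by ring]
  have hwnorm : ‖w‖ = 1 := by simp [hw, Pi.norm_single]
  have hentry : |Ut r b i j| ≤ ‖g b‖ := by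
    have h1 : (Ut r b *ᵥ w) i = Ut r b i j := by
      simp [hw, Matrix.mulVec_single]
    rw [hgbv, ← h1]
    simpa [Real.norm_eq_abs] using norm_le_pi_norm (Ut r b *ᵥ w) i
  have hexp : Real.exp ((d : ℝ) * B * (b - r)) ≤ Real.exp ((d : ℝ) * B * T) := by
    apply Real.exp_le_exp.2
    have : b - r ≤ T := by linarith
    have hdB : 0 ≤ (d : ℝ) * B := by positivity
    nlinarith
  calc |Ut r b i j| ≤ ‖g b‖ := hentry
    _ ≤ ‖w‖ * Real.exp ((d : ℝ) * B * (b - r)) := hgb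
    _ ≤ Real.exp ((d : ℝ) * B * T) := by rw [hwnorm, one_mul]; exact hexp


set_option maxHeartbeats 1000000 in
/-- With `Q_{t,s}` as above, for every `T > 0` there exists a
constant `C = C(T) > 0` such that `(det Q_{t,s})^{1/2} ≥ C (t−s)^{d/2}` for all
`0 < s < t < T`. -/
theorem stmt2 (d : ℕ) (M : ℝ → Matrix (Fin d) (Fin d) ℝ)
    (hM : Continuous M)
    (Ut : ℝ → ℝ → Matrix (Fin d) (Fin d) ℝ)
    (hUinit : ∀ s : ℝ, Ut s s = 1)
    (hUderiv : ∀ s t : ℝ, ∀ i j : Fin d,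
      HasDerivAt (fun τ : ℝ => Ut τ s i j) ((M (-t) * Ut t s) i j) t)
    (Q : ℝ → ℝ → Matrix (Fin d) (Fin d) ℝ)
    (hQ : ∀ s t : ℝ, ∀ i j : Fin d,
      Q s t i j = ∫ r in (-t)..(-s), (Ut (-s) r * (Ut (-s) r)ᵀ) i j)
    (T : ℝ) (hT : 0 < T) :
    ∃ C > 0, ∀ s t : ℝ, 0 < s → s < t → t < T →
      C * (t - s) ^ ((d : ℝ) / 2) ≤ Real.sqrt ((Q s t).det) := by
  rcases Nat.eq_zero_or_pos d with hd0 | hdpos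
  · subst hd0
    refine ⟨1, one_pos, fun s t _ _ _ => ?_⟩
    have hdet : (Q s t).det = 1 := Matrix.det_isEmpty
    simp [hdet]
  -- main case `0 < d`
  have hd : (0 : ℝ) < d := Nat.cast_pos.2 hdpos
  -- a uniform bound on the entries of `M` on `[-T, T]`
  obtain ⟨B, hBbd⟩ := (isCompact_Icc (a := -T) (b := T)).exists_bound_of_continuousOn
    (f := fun u => (fun i j => M u i j : Fin d → Fin d → ℝ))
    ((continuous_pi fun i => continuous_pi fun j => hM.matrix_elem i j).continuousOn)
  have hB0 : 0 ≤ B := le_trans (norm_nonneg _) (hBbd 0 ⟨by linarith, by linarith⟩)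
  have hMB : ∀ u ∈ Icc (-T) T, ∀ i j, |M u i j| ≤ B := by
    intro u hu i j
    have h2 : |M u i j| ≤ ‖(fun j => M u i j)‖ := by
      simpa [Real.norm_eq_abs] using norm_le_pi_norm (fun j => M u i j) j
    have h1 : ‖(fun j => M u i j)‖ ≤ ‖(fun i j => M u i j : Fin d → Fin d → ℝ)‖ :=
      norm_le_pi_norm (fun i j => M u i j : Fin d → Fin d → ℝ) i
    exact h2.trans (h1.trans (hBbd u hu))
  set E : ℝ := Real.exp ((d : ℝ) * B * T) with hE
  have hE1 : (1 : ℝ) ≤ E := Real.one_le_exp (by positivity)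
  have hEpos : (0 : ℝ) < E := lt_of_lt_of_le one_pos hE1
  set c₀ : ℝ := ((d : ℝ) ^ 3 * E ^ 2)⁻¹ with hc₀
  have hc₀pos : 0 < c₀ := by rw [hc₀]; positivity
  refine ⟨c₀ ^ ((d : ℝ) / 2), Real.rpow_pos_of_pos hc₀pos _, fun s t hs hst htT => ?_⟩
  have hab : (-t : ℝ) ≤ -s := by linarith
  have hts : 0 < t - s := by linarith
  -- the propagator is invertible, with inverse given by swapping the arguments
  have hinv : ∀ r ∈ Icc (-t) (-s), Ut (-s) r * Ut r (-s) = 1 := by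
    intro r hr
    have h : ∀ w : Fin d → ℝ, (Ut (-s) r * Ut r (-s)) *ᵥ w = w := by
      intro w
      have hfg := stmt2_uniq (T := T) hB0 (a := r) (b := -s) hr.2
        (by linarith [hr.1]) (by linarith) hMB
        (f := fun τ => Ut τ r *ᵥ (Ut r (-s) *ᵥ w)) (g := fun τ => Ut τ (-s) *ᵥ w)
        (fun τ => stmt2_sol hUderiv r _ τ) (fun τ => stmt2_sol hUderiv (-s) w τ)
        (by simp [hUinit r])
      simpa [hUinit, Matrix.mulVec_mulVec] using hfg
    ext i j
    have h2 := congrFun (h (Pi.single j 1)) i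
    simpa [Matrix.mulVec_single, Matrix.one_apply, Pi.single_apply, eq_comm] using h2
  -- entrywise bound on the inverse propagator
  have hUb : ∀ r ∈ Icc (-t) (-s), ∀ i j, |Ut r (-s) i j| ≤ E := fun r hr i j =>
    stmt2_backBound hUinit hUderiv hB0 hMB hT.le hr.2 (by linarith [hr.1]) (by linarith) i j
  -- continuity in the second argument, via the inverse
  have hUcont : Continuous fun r => Ut r (-s) :=
    continuous_matrix fun i j =>
      continuous_iff_continuousAt.2 fun r => (hUderiv (-s) r i j).differentiableAt.continuousAt
  have hdetne : ∀ r ∈ Icc (-t) (-s), (Ut r (-s)).det ≠ 0 := fun r hr =>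
    Matrix.det_ne_zero_of_left_inverse (hinv r hr)
  have hcontEntry : ∀ i j : Fin d, ContinuousOn (fun r => Ut (-s) r i j) (Icc (-t) (-s)) := by
    intro i j
    have hform : ∀ r ∈ Icc (-t) (-s),
        Ut (-s) r i j = ((Ut r (-s)).det)⁻¹ * (Ut r (-s)).adjugate i j := by
      intro r hr
      have h1 := Matrix.inv_eq_left_inv (hinv r hr)
      rw [← h1, Matrix.inv_def, Ring.inverse_eq_inv']
      simp [Matrix.smul_apply, smul_eq_mul]
    exact ContinuousOn.congr
      ((hUcont.matrix_det.continuousOn.inv₀ hdetne).mul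
        ((hUcont.matrix_adjugate.matrix_elem i j).continuousOn)) hform
  have hFc : ∀ i j : Fin d,
      ContinuousOn (fun r => (Ut (-s) r * (Ut (-s) r)ᵀ) i j) (Icc (-t) (-s)) := by
    intro i j
    have h : ContinuousOn (fun r => ∑ k, Ut (-s) r i k * Ut (-s) r j k) (Icc (-t) (-s)) :=
      continuousOn_finset_sum _ (fun k _ => (hcontEntry i k).mul (hcontEntry j k))
    simpa [Matrix.mul_apply, Matrix.transpose_apply] using h
  have hFint : ∀ i j : Fin d,
      IntervalIntegrable (fun r => (Ut (-s) r * (Ut (-s) r)ᵀ) i j) volume (-t) (-s) := by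
    intro i j
    apply ContinuousOn.intervalIntegrable
    rw [uIcc_of_le hab]
    exact hFc i j
  -- expanding the quadratic form as a finite sum
  have hexp : ∀ (N : Matrix (Fin d) (Fin d) ℝ) (x : Fin d → ℝ),
      x ⬝ᵥ (N *ᵥ x) = ∑ p : Fin d × Fin d, x p.1 * N p.1 p.2 * x p.2 := by
    intro N x
    simp [dotProduct, Matrix.mulVec, Fintype.sum_prod_type, Finset.mul_sum, mul_assoc]
  -- pointwise lower bound on the quadratic form of the integrand
  have hpt : ∀ r ∈ Icc (-t) (-s), ∀ x : Fin d → ℝ,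
      c₀ * (x ⬝ᵥ x) ≤ x ⬝ᵥ ((Ut (-s) r * (Ut (-s) r)ᵀ) *ᵥ x) := by
    intro r hr x
    set z : Fin d → ℝ := (Ut (-s) r)ᵀ *ᵥ x with hz
    have h1 : x ⬝ᵥ ((Ut (-s) r * (Ut (-s) r)ᵀ) *ᵥ x) = z ⬝ᵥ z := by
      rw [← Matrix.mulVec_mulVec, Matrix.dotProduct_mulVec, ← Matrix.mulVec_transpose]
    have hxz : x = (Ut r (-s))ᵀ *ᵥ z := by
      rw [hz, Matrix.mulVec_mulVec, ← Matrix.transpose_mul, hinv r hr,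
        Matrix.transpose_one, Matrix.one_mulVec]
    have hxi : ∀ i, |x i| ≤ (d : ℝ) * E * ‖z‖ := by
      intro i
      calc |x i| = |((Ut r (-s))ᵀ *ᵥ z) i| := by rw [← hxz]
        _ ≤ ‖(Ut r (-s))ᵀ *ᵥ z‖ := by
            simpa [Real.norm_eq_abs] using norm_le_pi_norm ((Ut r (-s))ᵀ *ᵥ z) i
        _ ≤ (d : ℝ) * E * ‖z‖ := stmt2_mulVec_norm_le _ (le_trans zero_le_one hE1)
            (fun i j => by simpa [Matrix.transpose_apply] using hUb r hr j i) z
    have hzznn : 0 ≤ z ⬝ᵥ z := Finset.sum_nonneg fun k _ => mul_self_nonneg _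
    have hzz : ‖z‖ ^ 2 ≤ z ⬝ᵥ z := by
      have hle : ‖z‖ ≤ Real.sqrt (z ⬝ᵥ z) := by
        rw [pi_norm_le_iff_of_nonneg (Real.sqrt_nonneg _)]
        intro k
        rw [Real.norm_eq_abs, ← Real.sqrt_sq_eq_abs]
        apply Real.sqrt_le_sqrt
        have hsingle := Finset.single_le_sum (f := fun l => z l * z l)
          (fun l _ => mul_self_nonneg _) (Finset.mem_univ k)
        have : z k ^ 2 ≤ ∑ l, z l * z l := by simpa [pow_two] using hsingle
        simpa [dotProduct] using this
      calc ‖z‖ ^ 2 ≤ Real.sqrt (z ⬝ᵥ z) ^ 2 := by nlinarith [norm_nonneg z, Real.sqrt_nonneg (z ⬝ᵥ z)]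
        _ = z ⬝ᵥ z := Real.sq_sqrt hzznn
    have hxx : x ⬝ᵥ x ≤ (d : ℝ) ^ 3 * E ^ 2 * ‖z‖ ^ 2 := by
      have hterm : ∀ i, x i * x i ≤ ((d : ℝ) * E * ‖z‖) ^ 2 := fun i => by
        nlinarith [hxi i, abs_nonneg (x i), abs_mul_abs_self (x i)]
      calc x ⬝ᵥ x = ∑ i, x i * x i := by simp [dotProduct]
        _ ≤ ∑ _i : Fin d, ((d : ℝ) * E * ‖z‖) ^ 2 := Finset.sum_le_sum fun i _ => hterm i
        _ = (d : ℝ) * ((d : ℝ) * E * ‖z‖) ^ 2 := by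
            simp [Finset.sum_const, Finset.card_univ, nsmul_eq_mul]
        _ = (d : ℝ) ^ 3 * E ^ 2 * ‖z‖ ^ 2 := by ring
    rw [h1]
    have hmain : c₀ * ((d : ℝ) ^ 3 * E ^ 2 * ‖z‖ ^ 2) = ‖z‖ ^ 2 := by
      rw [hc₀]; field_simp
    calc c₀ * (x ⬝ᵥ x) ≤ c₀ * ((d : ℝ) ^ 3 * E ^ 2 * ‖z‖ ^ 2) :=
          mul_le_mul_of_nonneg_left hxx hc₀pos.le
      _ = ‖z‖ ^ 2 := hmain
      _ ≤ z ⬝ᵥ z := hzz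
  -- the quadratic form of `Q` as an integral
  have hform : ∀ x : Fin d → ℝ, x ⬝ᵥ (Q s t *ᵥ x) =
      ∫ r in (-t)..(-s), x ⬝ᵥ ((Ut (-s) r * (Ut (-s) r)ᵀ) *ᵥ x) := by
    intro x
    calc x ⬝ᵥ (Q s t *ᵥ x) = ∑ p : Fin d × Fin d, x p.1 * Q s t p.1 p.2 * x p.2 := hexp _ x
      _ = ∑ p : Fin d × Fin d,
          ∫ r in (-t)..(-s), x p.1 * ((Ut (-s) r * (Ut (-s) r)ᵀ) p.1 p.2) * x p.2 := by
          refine Finset.sum_congr rfl fun p _ => ?_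
          rw [hQ s t p.1 p.2, ← intervalIntegral.integral_const_mul,
            ← intervalIntegral.integral_mul_const]
      _ = ∫ r in (-t)..(-s),
          ∑ p : Fin d × Fin d, x p.1 * ((Ut (-s) r * (Ut (-s) r)ᵀ) p.1 p.2) * x p.2 := by
          rw [intervalIntegral.integral_finset_sum]
          exact fun p _ => ((hFint p.1 p.2).const_mul (x p.1)).mul_const (x p.2)
      _ = ∫ r in (-t)..(-s), x ⬝ᵥ ((Ut (-s) r * (Ut (-s) r)ᵀ) *ᵥ x) := by
          refine intervalIntegral.integral_congr fun r _ => ?_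
          exact (hexp _ x).symm
  -- lower bound on the quadratic form of `Q`
  have hlow : ∀ x : Fin d → ℝ, c₀ * (t - s) * (x ⬝ᵥ x) ≤ x ⬝ᵥ (Q s t *ᵥ x) := by
    intro x
    rw [hform x]
    have hint : IntervalIntegrable
        (fun r => x ⬝ᵥ ((Ut (-s) r * (Ut (-s) r)ᵀ) *ᵥ x)) volume (-t) (-s) := by
      have heq : (fun r => x ⬝ᵥ ((Ut (-s) r * (Ut (-s) r)ᵀ) *ᵥ x)) =
          fun r => ∑ p : Fin d × Fin d,
            x p.1 * ((Ut (-s) r * (Ut (-s) r)ᵀ) p.1 p.2) * x p.2 :=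
        funext fun r => hexp _ x
      rw [heq]
      have hsum := IntervalIntegrable.sum (μ := volume) (a := -t) (b := -s)
        (Finset.univ (α := Fin d × Fin d))
        (f := fun p : Fin d × Fin d => fun r =>
          x p.1 * ((Ut (-s) r * (Ut (-s) r)ᵀ) p.1 p.2) * x p.2)
        (fun p _ => ((hFint p.1 p.2).const_mul (x p.1)).mul_const (x p.2))
      rwa [Finset.sum_fn] at hsum
    have hmono := intervalIntegral.integral_mono_on hab intervalIntegrable_const hint
      (fun r hr => hpt r hr x)
    have hconst : (∫ (_ : ℝ) in (-t)..(-s), c₀ * (x ⬝ᵥ x)) = (t - s) * (c₀ * (x ⬝ᵥ x)) := by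
      rw [intervalIntegral.integral_const, smul_eq_mul]
      ring_nf
    rw [hconst] at hmono
    calc c₀ * (t - s) * (x ⬝ᵥ x) = (t - s) * (c₀ * (x ⬝ᵥ x)) := by ring
      _ ≤ _ := hmono
  -- `Q` is symmetric
  have hH : (Q s t).IsHermitian := by
    show (Q s t)ᴴ = Q s t
    ext i j
    rw [Matrix.conjTranspose_apply, star_trivial, hQ s t j i, hQ s t i j]
    refine intervalIntegral.integral_congr fun r _ => ?_
    simp [Matrix.mul_apply, Matrix.transpose_apply, mul_comm]
  -- eigenvalue lower bound
  have heig : ∀ i, c₀ * (t - s) ≤ hH.eigenvalues i := by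
    intro i
    have hev := hH.eigenvalues_eq i
    set v : Fin d → ℝ := ⇑(hH.eigenvectorBasis i) with hvv
    have hvsum : v ⬝ᵥ v = 1 := by
      have hn : ‖hH.eigenvectorBasis i‖ = 1 := hH.eigenvectorBasis.orthonormal.1 i
      rw [EuclideanSpace.norm_eq] at hn
      have hsq := Real.sqrt_eq_one.mp hn
      calc v ⬝ᵥ v = ∑ k, ‖v k‖ ^ 2 := by
            simp [dotProduct, Real.norm_eq_abs, sq_abs, sq]
        _ = 1 := hsq
    have hq := hlow v
    rw [hvsum, mul_one] at hq
    rw [hev]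
    simpa [star_trivial] using hq
  -- determinant lower bound
  have hdet : (c₀ * (t - s)) ^ d ≤ (Q s t).det := by
    have hdd := hH.det_eq_prod_eigenvalues
    have hprod : (c₀ * (t - s)) ^ d ≤ ∏ i, hH.eigenvalues i := by
      calc (c₀ * (t - s)) ^ d = ∏ _i : Fin d, (c₀ * (t - s)) := by
            simp [Finset.prod_const, Finset.card_univ]
        _ ≤ ∏ i, hH.eigenvalues i := Finset.prod_le_prod
            (fun i _ => mul_nonneg hc₀pos.le hts.le) (fun i _ => heig i)
    calc (c₀ * (t - s)) ^ d ≤ ∏ i, hH.eigenvalues i := hprod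
      _ = (Q s t).det := by rw [hdd]; norm_num
  -- wrap up with `sqrt` and `rpow`
  have hbase : 0 ≤ c₀ * (t - s) := mul_nonneg hc₀pos.le hts.le
  have hcc : Real.sqrt ((c₀ * (t - s)) ^ d) =
      c₀ ^ ((d : ℝ) / 2) * (t - s) ^ ((d : ℝ) / 2) := by
    rw [Real.sqrt_eq_rpow, ← Real.rpow_natCast (c₀ * (t - s)) d, ← Real.rpow_mul hbase,
      show (d : ℝ) * (1 / 2) = (d : ℝ) / 2 by ring, Real.mul_rpow hc₀pos.le hts.le]
  calc c₀ ^ ((d : ℝ) / 2) * (t - s) ^ ((d : ℝ) / 2)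
      = Real.sqrt ((c₀ * (t - s)) ^ d) := hcc.symm
    _ ≤ Real.sqrt ((Q s t).det) := Real.sqrt_le_sqrt hdet
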